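/- Let G be a finite abelian group and let S = a_1, ..., a_m be a sequence of non-identity elements of G. Let P be the set of all products of subsequences of S (including the empty product, which equals 1). If the stabilizer Stab_G(P) = {x ∈ G : xP = P} is trivial, then |P| ≥ m + 1. -/

import Mathlib

theorem stmt1 {G : Type*} [CommGroup G] [Finite G] (m : ℕ) (a : Fin m → G)
    (ha : ∀ i, a i ≠ 1) (P : Set G)
    (hP : P = {g : G | ∃ T : Finset (Fin m), ∏ i ∈ T, a i = g})
    (hstab : {x : G | (x * ·) '' P = P} = {1}) :
    m + 1 ≤ P.ncard := by
  classical
  set f : ℕ → Set G := fun j =>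
    {g | ∃ T : Finset (Fin m), (∀ i ∈ T, (i : ℕ) < j) ∧ ∏ i ∈ T, a i = g} with hf
  have hone : ∀ j, (1 : G) ∈ f j := fun j => ⟨∅, by simp⟩
  have hmono : ∀ j k, j ≤ k → f j ⊆ f k := by
    rintro j k hjk g ⟨T, hT, hprod⟩
    exact ⟨T, fun i hi => lt_of_lt_of_le (hT i hi) hjk, hprod⟩
  have hfm : f m = P := by
    rw [hP]
    ext g
    constructor
    · rintro ⟨T, _, hprod⟩; exact ⟨T, hprod⟩
    · rintro ⟨T, hprod⟩; exact ⟨T, fun i _ => i.isLt, hprod⟩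
  -- key: strict inclusion at each step below m
  have hkey : ∀ j, j < m → f j ⊂ f (j + 1) := by
    intro j hj
    refine ⟨hmono j (j + 1) (Nat.le_succ j), fun hsub : f (j+1) ⊆ f j => ?_⟩
    set jf : Fin m := ⟨j, hj⟩
    -- a jf * (f j) ⊆ f j
    have himg : (a jf * ·) '' f j ⊆ f j := by
      rintro x ⟨p, ⟨T, hT, hprod⟩, rfl⟩
      refine hsub ⟨insert jf T, ?_, ?_⟩
      · intro i hi
        rcases Finset.mem_insert.mp hi with rfl | hi
        · exact Nat.lt_succ_self j
        · exact lt_trans (hT i hi) (Nat.lt_succ_self j)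
      · have hjT : jf ∉ T := fun h => lt_irrefl j (hT jf h)
        rw [Finset.prod_insert hjT, hprod]
    have hfin : (f j).Finite := Set.toFinite _
    have heq : (a jf * ·) '' f j = f j := by
      apply Set.eq_of_subset_of_ncard_le himg
        (Set.ncard_image_of_injective _ (mul_right_injective (a jf))).ge hfin
    -- a jf * P ⊆ P
    have hPimg : (a jf * ·) '' P ⊆ P := by
      rintro x ⟨g, hg, rfl⟩
      rw [hP] at hg ⊢
      obtain ⟨T, hprod⟩ := hg
      set T1 := T.filter (fun i : Fin m => (i : ℕ) < j) with hT1
      set T2 := T.filter (fun i : Fin m => ¬ (i : ℕ) < j) with hT2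
      have hsplit : ∏ i ∈ T, a i = (∏ i ∈ T1, a i) * ∏ i ∈ T2, a i :=
        (Finset.prod_filter_mul_prod_filter_not T (fun i : Fin m => (i : ℕ) < j) a).symm
      have h1 : (∏ i ∈ T1, a i) ∈ f j :=
        ⟨T1, fun i hi => (Finset.mem_filter.mp hi).2, rfl⟩
      have h2 : a jf * ∏ i ∈ T1, a i ∈ f j := heq ▸ ⟨_, h1, rfl⟩
      obtain ⟨T', hT', hprod'⟩ := h2
      refine ⟨T' ∪ T2, ?_⟩
      have hdis : Disjoint T' T2 := by
        rw [Finset.disjoint_left]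
        intro i hi hi2
        exact (Finset.mem_filter.mp hi2).2 (hT' i hi)
      rw [Finset.prod_union hdis, hprod', ← hprod, hsplit, mul_assoc]
    have hPeq : (a jf * ·) '' P = P := by
      apply Set.eq_of_subset_of_ncard_le hPimg
        (Set.ncard_image_of_injective _ (mul_right_injective (a jf))).ge (Set.toFinite _)
    have : a jf ∈ ({x : G | (x * ·) '' P = P}) := hPeq
    rw [hstab] at this
    exact ha jf this
  have hcard : ∀ j, j ≤ m → j + 1 ≤ (f j).ncard := by
    intro j
    induction j with
    | zero =>
      intro _
      have h0 : (f 0).Nonempty := ⟨1, hone 0⟩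
      have := (Set.ncard_pos (Set.toFinite _)).mpr h0
      omega
    | succ k ih =>
      intro hk
      have hlt := hkey k (lt_of_lt_of_le (Nat.lt_succ_self k) hk)
      have := Set.ncard_lt_ncard hlt (Set.toFinite _)
      have hk' := ih (le_of_lt (lt_of_lt_of_le (Nat.lt_succ_self k) hk))
      omega
  have := hcard m le_rfl
  rwa [hfm] at this
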